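/- arXiv:1802.07558 — 5 statements merged into one kernel-verified Lean document; each statement's English description precedes it below -/
import Mathlib

section
/- For positive reals a ≥ b > 0, AGM(a, b) satisfies the integral identity 1/AGM(a,b) = (2/π) ∫_0^{π/2} dθ / sqrt(a² cos²θ + b² sin²θ). -/
noncomputable def AGM (a b : ℝ) : ℝ :=
  Filter.limUnder Filter.atTop
    (fun n => ((fun p : ℝ × ℝ => ((p.1 + p.2) / 2, Real.sqrt (p.1 * p.2)))^[n] (a, b)).1)

open Real

namespace AGMIntegralAux

open MeasureTheory Set Filter

/-! ### The tangent substitution -/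

lemma tan_image (b : ℝ) (hb : 0 < b) : (fun θ => b * tan θ) '' Ioo 0 (π/2) = Ioi 0 := by
  ext y
  constructor
  · rintro ⟨θ, ⟨h1, h2⟩, rfl⟩
    exact mul_pos hb (tan_pos_of_pos_of_lt_pi_div_two h1 h2)
  · intro hy
    refine ⟨arctan (y / b), ⟨?_, arctan_lt_pi_div_two _⟩, ?_⟩
    · rw [← arctan_zero]
      exact arctan_strictMono (div_pos hy hb)
    · simp only [tan_arctan]
      field_simp

lemma step_A (a b : ℝ) (ha : 0 < a) (hb : 0 < b) :
    ∫ x in Ioi (0:ℝ), 1 / Real.sqrt ((x^2 + a^2) * (x^2 + b^2))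
      = ∫ θ in Ioo (0:ℝ) (π/2), 1 / Real.sqrt (a^2 * cos θ^2 + b^2 * sin θ^2) := by
  rw [← tan_image b hb,
    integral_image_eq_integral_abs_deriv_smul measurableSet_Ioo
      (f' := fun θ => b / cos θ ^ 2) ?_ ?_]
  · apply setIntegral_congr_fun measurableSet_Ioo
    intro θ ⟨h1, h2⟩
    have hc : 0 < cos θ := cos_pos_of_mem_Ioo ⟨by linarith [pi_div_two_pos], h2⟩
    have hD : 0 < a^2 * cos θ^2 + b^2 * sin θ^2 := by positivity
    have hsq : Real.sqrt (a^2 * cos θ^2 + b^2 * sin θ^2) ^ 2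
        = a^2 * cos θ^2 + b^2 * sin θ^2 := Real.sq_sqrt hD.le
    have hs : sin θ^2 = 1 - cos θ^2 := by have := sin_sq_add_cos_sq θ; linarith
    have key : ((b * tan θ)^2 + a^2) * ((b * tan θ)^2 + b^2)
        = (b * Real.sqrt (a^2 * cos θ^2 + b^2 * sin θ^2) / cos θ^2)^2 := by
      simp only [div_pow, mul_pow, hsq, tan_eq_sin_div_cos]
      simp only [hs]
      field_simp
      ring
    simp only [smul_eq_mul, key, Real.sqrt_sq (by positivity :
      (0:ℝ) ≤ b * Real.sqrt (a^2 * cos θ^2 + b^2 * sin θ^2) / cos θ^2)]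
    rw [abs_of_pos (by positivity)]
    field_simp
  · intro θ ⟨h1, h2⟩
    have hc : 0 < cos θ := cos_pos_of_mem_Ioo ⟨by linarith [pi_div_two_pos], h2⟩
    have := ((hasDerivAt_tan hc.ne').const_mul b).hasDerivWithinAt
      (s := Ioo (0:ℝ) (π/2))
    refine this.congr_deriv ?_
    rw [one_div]; field_simp
  · have hsub : Ioo (0:ℝ) (π/2) ⊆ Ioo (-(π/2)) (π/2) := fun x hx =>
      ⟨by linarith [hx.1, pi_div_two_pos], hx.2⟩
    intro x hx y hy h
    simp only [] at h
    exact injOn_tan (hsub hx) (hsub hy) (mul_left_cancel₀ hb.ne' h)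

/-! ### The Landen/Gauss substitution -/

lemma landen_image (a b : ℝ) (ha : 0 < a) (hb : 0 < b) :
    (fun t => (t - a*b/t)/2) '' Ioi 0 = univ := by
  apply eq_univ_of_forall
  intro x
  have hab : 0 < a*b := mul_pos ha hb
  have hs : 0 < Real.sqrt (x^2 + a*b) := Real.sqrt_pos.2 (by positivity)
  have hsx : -x < Real.sqrt (x^2 + a*b) := by
    rcases le_or_gt x 0 with h | h
    · have : |x| < Real.sqrt (x^2 + a*b) := by
        rw [← Real.sqrt_sq_eq_abs]
        exact Real.sqrt_lt_sqrt (sq_nonneg x) (by linarith)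
      calc -x ≤ |x| := neg_le_abs x
        _ < _ := this
    · linarith
  set t := x + Real.sqrt (x^2 + a*b) with hts
  have ht : 0 < t := by simp only [hts]; linarith
  refine ⟨t, ht, ?_⟩
  have hsq : Real.sqrt (x^2 + a*b) ^ 2 = x^2 + a*b := Real.sq_sqrt (by positivity)
  have hdiv : a*b/t = Real.sqrt (x^2 + a*b) - x := by
    rw [div_eq_iff ht.ne', hts]
    nlinarith [hsq]
  simp only [hdiv]
  simp only [hts]
  ring

lemma step_B (a b : ℝ) (ha : 0 < a) (hb : 0 < b) :
    ∫ x in Ioi (0:ℝ),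
        1 / Real.sqrt ((x^2 + ((a+b)/2)^2) * (x^2 + Real.sqrt (a*b)^2))
      = ∫ x in Ioi (0:ℝ), 1 / Real.sqrt ((x^2 + a^2) * (x^2 + b^2)) := by
  have hab : 0 < a*b := mul_pos ha hb
  have hd2 : Real.sqrt (a*b)^2 = a*b := Real.sq_sqrt hab.le
  have heven : ∫ x : ℝ, 1 / Real.sqrt ((x^2 + ((a+b)/2)^2) * (x^2 + Real.sqrt (a*b)^2))
      = 2 * ∫ x in Ioi (0:ℝ),
        1 / Real.sqrt ((x^2 + ((a+b)/2)^2) * (x^2 + Real.sqrt (a*b)^2)) := by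
    rw [← integral_comp_abs (f := fun x =>
      1 / Real.sqrt ((x^2 + ((a+b)/2)^2) * (x^2 + Real.sqrt (a*b)^2)))]
    simp [sq_abs]
  have hcv : ∫ x : ℝ, 1 / Real.sqrt ((x^2 + ((a+b)/2)^2) * (x^2 + Real.sqrt (a*b)^2))
      = ∫ t in Ioi (0:ℝ), 2 * (1 / Real.sqrt ((t^2 + a^2) * (t^2 + b^2))) := by
    rw [← setIntegral_univ, ← landen_image a b ha hb,
      integral_image_eq_integral_abs_deriv_smul measurableSet_Ioi
        (f' := fun t => (1 + a*b/t^2)/2) ?_ ?_]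
    · apply setIntegral_congr_fun measurableSet_Ioi
      intro t ht
      have ht : 0 < t := ht
      have hP : 0 < (t^2 + a^2) * (t^2 + b^2) := by positivity
      have key1 : ((t - a*b/t)/2)^2 + ((a+b)/2)^2
          = (t^2 + a^2) * (t^2 + b^2) / (4*t^2) := by field_simp; ring
      have key2 : ((t - a*b/t)/2)^2 + Real.sqrt (a*b)^2 = ((t^2 + a*b)/(2*t))^2 := by
        rw [hd2]; field_simp; ring
      have key : Real.sqrt ((((t - a*b/t)/2)^2 + ((a+b)/2)^2)
            * (((t - a*b/t)/2)^2 + Real.sqrt (a*b)^2))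
          = Real.sqrt ((t^2+a^2)*(t^2+b^2)) * (t^2 + a*b) / (4*t^2) := by
        rw [key1, key2]
        rw [show (t^2 + a^2) * (t^2 + b^2) / (4*t^2) * (((t^2 + a*b)/(2*t))^2)
            = (Real.sqrt ((t^2+a^2)*(t^2+b^2)) * (t^2 + a*b) / (4*t^2))^2 by
          simp only [div_pow, mul_pow, Real.sq_sqrt hP.le]
          field_simp
          ring]
        exact Real.sqrt_sq (by positivity)
      simp only [smul_eq_mul, key]
      rw [abs_of_pos (by positivity)]
      rw [eq_comm]
      field_simp
      ring
    · intro t ht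
      have ht : 0 < t := ht
      have h1 : HasDerivAt (fun t : ℝ => t - a*b/t) (1 + a*b/t^2) t := by
        have hd := (hasDerivAt_id t).sub
          ((hasDerivAt_const t (a*b)).div (hasDerivAt_id t) ht.ne')
        refine hd.congr_deriv ?_
        simp; ring
      exact (h1.div_const 2).hasDerivWithinAt
    · intro x hx y hy h
      have hx : 0 < x := hx
      have hy : 0 < y := hy
      simp only [] at h
      rcases lt_trichotomy x y with hlt | heq | hlt
      · have h1 : a*b/y < a*b/x := div_lt_div_of_pos_left hab hx hlt
        exact absurd h (ne_of_lt (by linarith))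
      · exact heq
      · have h1 : a*b/x < a*b/y := div_lt_div_of_pos_left hab hy hlt
        exact absurd h (ne_of_gt (by linarith))
  have hInt : ∫ t in Ioi (0:ℝ), 2 * (1 / Real.sqrt ((t^2 + a^2) * (t^2 + b^2)))
      = 2 * ∫ t in Ioi (0:ℝ), 1 / Real.sqrt ((t^2 + a^2) * (t^2 + b^2)) :=
    integral_const_mul 2 _
  have h2 := heven.symm.trans (hcv.trans hInt)
  linarith

/-! ### Invariance of the elliptic integral under the AGM step -/

lemma interval_to_Ioo (f : ℝ → ℝ) :
    ∫ θ in (0:ℝ)..(π/2), f θ = ∫ θ in Ioo (0:ℝ) (π/2), f θ := by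
  rw [intervalIntegral.integral_of_le (by positivity), integral_Ioc_eq_integral_Ioo]

lemma invariance (a b : ℝ) (ha : 0 < a) (hb : 0 < b) :
    ∫ θ in (0:ℝ)..(π/2),
        1 / Real.sqrt (((a+b)/2)^2 * cos θ^2 + Real.sqrt (a*b)^2 * sin θ^2)
      = ∫ θ in (0:ℝ)..(π/2), 1 / Real.sqrt (a^2 * cos θ^2 + b^2 * sin θ^2) := by
  have ha' : 0 < (a+b)/2 := by linarith
  have hb' : 0 < Real.sqrt (a*b) := Real.sqrt_pos.2 (mul_pos ha hb)
  rw [interval_to_Ioo, interval_to_Ioo, ← step_A ((a+b)/2) (Real.sqrt (a*b)) ha' hb',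
    step_B a b ha hb, step_A a b ha hb]

/-! ### Bounds on the elliptic integral -/

lemma denom_lb (a b θ : ℝ) (hb : 0 < b) (hab : b ≤ a) :
    b^2 ≤ a^2 * cos θ^2 + b^2 * sin θ^2 := by
  nlinarith [sin_sq_add_cos_sq θ,
    mul_nonneg (mul_nonneg (sub_nonneg.2 hab) (by linarith : (0:ℝ) ≤ a + b)) (sq_nonneg (cos θ))]

lemma denom_ub (a b θ : ℝ) (hb : 0 < b) (hab : b ≤ a) :
    a^2 * cos θ^2 + b^2 * sin θ^2 ≤ a^2 := by
  nlinarith [sin_sq_add_cos_sq θ,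
    mul_nonneg (mul_nonneg (sub_nonneg.2 hab) (by linarith : (0:ℝ) ≤ a + b)) (sq_nonneg (sin θ))]

lemma denom_pos (a b θ : ℝ) (hb : 0 < b) (hab : b ≤ a) :
    0 < a^2 * cos θ^2 + b^2 * sin θ^2 :=
  lt_of_lt_of_le (by positivity) (denom_lb a b θ hb hab)

lemma integrand_cont (a b : ℝ) (hb : 0 < b) (hab : b ≤ a) :
    Continuous (fun θ : ℝ => 1 / Real.sqrt (a^2 * cos θ^2 + b^2 * sin θ^2)) := by
  apply Continuous.div continuous_const
  · exact (Real.continuous_sqrt.comp (by continuity))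
  · intro θ
    have h := denom_pos a b θ hb hab
    positivity

lemma bounds (a b : ℝ) (hb : 0 < b) (hab : b ≤ a) :
    π/(2*a) ≤ (∫ θ in (0:ℝ)..(π/2), 1 / Real.sqrt (a^2 * cos θ^2 + b^2 * sin θ^2))
    ∧ (∫ θ in (0:ℝ)..(π/2), 1 / Real.sqrt (a^2 * cos θ^2 + b^2 * sin θ^2)) ≤ π/(2*b) := by
  have ha : 0 < a := lt_of_lt_of_le hb hab
  have hpi : (0:ℝ) ≤ π/2 := by positivity
  have hint : IntervalIntegrable
      (fun θ => 1 / Real.sqrt (a^2 * cos θ^2 + b^2 * sin θ^2)) volume 0 (π/2) :=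
    (integrand_cont a b hb hab).intervalIntegrable _ _
  have hsb : ∀ θ, b ≤ Real.sqrt (a^2 * cos θ^2 + b^2 * sin θ^2) := fun θ => by
    calc b = Real.sqrt (b^2) := (Real.sqrt_sq hb.le).symm
      _ ≤ _ := Real.sqrt_le_sqrt (denom_lb a b θ hb hab)
  have hsa : ∀ θ, Real.sqrt (a^2 * cos θ^2 + b^2 * sin θ^2) ≤ a := fun θ => by
    calc Real.sqrt (a^2 * cos θ^2 + b^2 * sin θ^2) ≤ Real.sqrt (a^2) :=
        Real.sqrt_le_sqrt (denom_ub a b θ hb hab)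
      _ = a := Real.sqrt_sq ha.le
  have hsD : ∀ θ, 0 < Real.sqrt (a^2 * cos θ^2 + b^2 * sin θ^2) := fun θ =>
    lt_of_lt_of_le hb (hsb θ)
  constructor
  · have := intervalIntegral.integral_mono_on hpi
      (intervalIntegrable_const (c := 1/a)) hint
      (fun θ _ => one_div_le_one_div_of_le (hsD θ) (hsa θ))
    rw [intervalIntegral.integral_const] at this
    calc π/(2*a) = (π/2 - 0) • (1/a) := by rw [smul_eq_mul]; ring
      _ ≤ _ := this
  · have := intervalIntegral.integral_mono_on hpi hint
      (intervalIntegrable_const (c := 1/b))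
      (fun θ _ => one_div_le_one_div_of_le hb (hsb θ))
    rw [intervalIntegral.integral_const] at this
    calc _ ≤ (π/2 - 0) • (1/b) := this
      _ = π/(2*b) := by rw [smul_eq_mul]; ring

/-! ### The AGM iteration -/

noncomputable def agmF : ℝ × ℝ → ℝ × ℝ := fun p => ((p.1 + p.2) / 2, Real.sqrt (p.1 * p.2))
noncomputable def aseq (a b : ℝ) (n : ℕ) : ℝ := (agmF^[n] (a, b)).1
noncomputable def bseq (a b : ℝ) (n : ℕ) : ℝ := (agmF^[n] (a, b)).2

section seq
variable (a b : ℝ)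

lemma aseq_succ (n : ℕ) : aseq a b (n+1) = (aseq a b n + bseq a b n) / 2 := by
  simp [aseq, bseq, Function.iterate_succ_apply', agmF]

lemma bseq_succ (n : ℕ) : bseq a b (n+1) = Real.sqrt (aseq a b n * bseq a b n) := by
  simp [aseq, bseq, Function.iterate_succ_apply', agmF]

lemma amgm {x y : ℝ} (hy : 0 < y) (hxy : y ≤ x) : Real.sqrt (x * y) ≤ (x + y)/2 := by
  calc Real.sqrt (x*y) ≤ Real.sqrt (((x+y)/2)^2) :=
      Real.sqrt_le_sqrt (by nlinarith [sq_nonneg (x - y)])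
    _ = (x+y)/2 := Real.sqrt_sq (by linarith)

variable (hb : 0 < b) (hab : b ≤ a)
include hb hab

lemma seq_inv (n : ℕ) : 0 < bseq a b n ∧ bseq a b n ≤ aseq a b n := by
  induction n with
  | zero => exact ⟨hb, hab⟩
  | succ n ih =>
    obtain ⟨h1, h2⟩ := ih
    rw [aseq_succ, bseq_succ]
    refine ⟨Real.sqrt_pos.2 (by nlinarith), amgm h1 h2⟩

lemma aseq_anti : Antitone (aseq a b) := by
  apply antitone_nat_of_succ_le
  intro n
  obtain ⟨h1, h2⟩ := seq_inv a b hb hab n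
  rw [aseq_succ]; linarith

lemma bseq_mono : Monotone (bseq a b) := by
  apply monotone_nat_of_le_succ
  intro n
  obtain ⟨h1, h2⟩ := seq_inv a b hb hab n
  rw [bseq_succ]
  calc bseq a b n = Real.sqrt (bseq a b n * bseq a b n) := by
        exact (Real.sqrt_mul_self h1.le).symm
    _ ≤ _ := Real.sqrt_le_sqrt (by nlinarith)

lemma bseq_le (n : ℕ) : b ≤ bseq a b n := bseq_mono a b hb hab (Nat.zero_le n)
lemma aseq_le (n : ℕ) : aseq a b n ≤ a := aseq_anti a b hb hab (Nat.zero_le n)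
lemma b_le_aseq (n : ℕ) : b ≤ aseq a b n :=
  le_trans (bseq_le a b hb hab n) (seq_inv a b hb hab n).2

lemma agm_limits : ∃ M : ℝ, b ≤ M ∧ M ≤ a ∧
    Tendsto (aseq a b) atTop (nhds M) ∧ Tendsto (bseq a b) atTop (nhds M) := by
  have hbdA : BddBelow (range (aseq a b)) :=
    ⟨b, by rintro _ ⟨n, rfl⟩; exact b_le_aseq a b hb hab n⟩
  have hbdB : BddAbove (range (bseq a b)) :=
    ⟨a, by rintro _ ⟨n, rfl⟩; exact le_trans (seq_inv a b hb hab n).2 (aseq_le a b hb hab n)⟩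
  have hA : Tendsto (aseq a b) atTop (nhds (⨅ n, aseq a b n)) :=
    tendsto_atTop_ciInf (aseq_anti a b hb hab) hbdA
  have hB : Tendsto (bseq a b) atTop (nhds (⨆ n, bseq a b n)) :=
    tendsto_atTop_ciSup (bseq_mono a b hb hab) hbdB
  set A := ⨅ n, aseq a b n
  set B := ⨆ n, bseq a b n
  have hAB : A = B := by
    have h1 : Tendsto (fun n => aseq a b (n+1)) atTop (nhds A) :=
      hA.comp (tendsto_add_atTop_nat 1)
    have h2 : Tendsto (fun n => (aseq a b n + bseq a b n)/2) atTop (nhds ((A+B)/2)) :=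
      (hA.add hB).div_const 2
    have h3 : (fun n => aseq a b (n+1)) = fun n => (aseq a b n + bseq a b n)/2 := by
      funext n; exact aseq_succ a b n
    rw [h3] at h1
    have := tendsto_nhds_unique h1 h2
    linarith
  refine ⟨A, ?_, ?_, hA, hAB ▸ hB⟩
  · exact le_ciInf fun n => b_le_aseq a b hb hab n
  · exact ciInf_le_of_le hbdA 0 le_rfl

lemma integral_invariant (n : ℕ) :
    ∫ θ in (0:ℝ)..(π/2),
        1 / Real.sqrt ((aseq a b n)^2 * cos θ^2 + (bseq a b n)^2 * sin θ^2)
      = ∫ θ in (0:ℝ)..(π/2), 1 / Real.sqrt (a^2 * cos θ^2 + b^2 * sin θ^2) := by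
  induction n with
  | zero => rfl
  | succ n ih =>
    obtain ⟨h1, h2⟩ := seq_inv a b hb hab n
    have h0 : 0 < aseq a b n := lt_of_lt_of_le h1 h2
    rw [aseq_succ, bseq_succ, invariance _ _ h0 h1, ih]

end seq

end AGMIntegralAux

open AGMIntegralAux MeasureTheory Set Filter
theorem agm_integral (a b : ℝ) (hb : 0 < b) (hab : b ≤ a) :
    1 / AGM a b =
      (2 / π) * ∫ θ in (0 : ℝ)..(π / 2),
        1 / Real.sqrt (a ^ 2 * Real.cos θ ^ 2 + b ^ 2 * Real.sin θ ^ 2) := by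
  obtain ⟨M, hbM, hMa, hA, hB⟩ := agm_limits a b hb hab
  have hM : 0 < M := lt_of_lt_of_le hb hbM
  have hAGM : AGM a b = M := hA.limUnder_eq
  set I := ∫ θ in (0 : ℝ)..(π / 2),
      1 / Real.sqrt (a ^ 2 * Real.cos θ ^ 2 + b ^ 2 * Real.sin θ ^ 2) with hI
  have hlow : ∀ n, π/(2 * aseq a b n) ≤ I := by
    intro n
    obtain ⟨h1, h2⟩ := seq_inv a b hb hab n
    have := (bounds (aseq a b n) (bseq a b n) h1 h2).1
    rwa [integral_invariant a b hb hab n] at this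
  have hhigh : ∀ n, I ≤ π/(2 * bseq a b n) := by
    intro n
    obtain ⟨h1, h2⟩ := seq_inv a b hb hab n
    have := (bounds (aseq a b n) (bseq a b n) h1 h2).2
    rwa [integral_invariant a b hb hab n] at this
  have hTA : Tendsto (fun n => π/(2 * aseq a b n)) atTop (nhds (π/(2*M))) :=
    tendsto_const_nhds.div (hA.const_mul 2) (by positivity)
  have hTB : Tendsto (fun n => π/(2 * bseq a b n)) atTop (nhds (π/(2*M))) :=
    tendsto_const_nhds.div (hB.const_mul 2) (by positivity)
  have hle : π/(2*M) ≤ I := le_of_tendsto hTA (Eventually.of_forall hlow)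
  have hge : I ≤ π/(2*M) := ge_of_tendsto hTB (Eventually.of_forall hhigh)
  have hIval : I = π/(2*M) := le_antisymm hge hle
  rw [hAGM, hIval]
  have hπ : π ≠ 0 := pi_ne_zero
  field_simp
end

section
/- The integral I(a,b) = ∫_0^{π/2} dθ / sqrt(a² cos²θ + b² sin²θ) is invariant under one step of the AGM iteration: I(a,b) = I((a+b)/2, sqrt(a*b)) for all positive reals a, b. -/
open Real MeasureTheory Set

-- Lemma A: trig form equals rational form on Ioi 0
lemma lemA (a b : ℝ) (ha : 0 < a) (hb : 0 < b) :
    (∫ x in Ioi (0:ℝ), 1 / Real.sqrt ((x^2 + a^2) * (x^2 + b^2))) =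
      ∫ θ in Ioo (0:ℝ) (π/2), 1 / Real.sqrt (a^2 * Real.cos θ^2 + b^2 * Real.sin θ^2) := by
  have hs : MeasurableSet (Ioo (0:ℝ) (π/2)) := measurableSet_Ioo
  have himg : (fun θ => b * Real.tan θ) '' Ioo (0:ℝ) (π/2) = Ioi (0:ℝ) := by
    ext y
    constructor
    · rintro ⟨θ, ⟨h1, h2⟩, rfl⟩
      exact mul_pos hb (Real.tan_pos_of_pos_of_lt_pi_div_two h1 h2)
    · intro hy
      refine ⟨Real.arctan (y / b), ⟨?_, Real.arctan_lt_pi_div_two _⟩, ?_⟩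
      · have := Real.arctan_strictMono (div_pos hy hb)
        rwa [Real.arctan_zero] at this
      · show b * Real.tan (Real.arctan (y / b)) = y
        rw [Real.tan_arctan]
        field_simp
  have hsub : Ioo (0:ℝ) (π/2) ⊆ Ioo (-(π/2)) (π/2) := by
    intro θ hθ; exact ⟨by linarith [hθ.1, pi_pos], hθ.2⟩
  have hinj : InjOn (fun θ => b * Real.tan θ) (Ioo (0:ℝ) (π/2)) := by
    intro x hx y hy h
    exact Real.injOn_tan (hsub hx) (hsub hy) (mul_left_cancel₀ hb.ne' h)
  have hder : ∀ θ ∈ Ioo (0:ℝ) (π/2), HasDerivWithinAt (fun θ => b * Real.tan θ)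
      (b / Real.cos θ ^ 2) (Ioo (0:ℝ) (π/2)) θ := by
    intro θ hθ
    have hcos : Real.cos θ ≠ 0 :=
      (Real.cos_pos_of_mem_Ioo (hsub hθ)).ne'
    have := (Real.hasDerivAt_tan hcos).const_mul b
    rw [mul_one_div] at this
    exact this.hasDerivWithinAt
  rw [← himg, integral_image_eq_integral_abs_deriv_smul hs hder hinj]
  refine setIntegral_congr_fun hs fun θ hθ => ?_
  have hcos : 0 < Real.cos θ := Real.cos_pos_of_mem_Ioo (hsub hθ)
  have hsq : (b * Real.tan θ)^2 + a^2 > 0 := by positivity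
  have hkey : ((b * Real.tan θ)^2 + a^2) * ((b * Real.tan θ)^2 + b^2)
      = (b / Real.cos θ ^ 2 * Real.sqrt (a^2 * Real.cos θ^2 + b^2 * Real.sin θ^2))^2 := by
    have hS : Real.sqrt (a^2 * Real.cos θ^2 + b^2 * Real.sin θ^2) ^ 2
        = a^2 * Real.cos θ^2 + b^2 * Real.sin θ^2 := Real.sq_sqrt (by positivity)
    have e1 : (b * Real.tan θ)^2 + a^2 = (a^2 * Real.cos θ^2 + b^2 * Real.sin θ^2) / Real.cos θ^2 := by
      rw [Real.tan_eq_sin_div_cos]; field_simp; ring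
    have e2 : (b * Real.tan θ)^2 + b^2 = b^2 / Real.cos θ^2 := by
      rw [Real.tan_eq_sin_div_cos]; field_simp
      linear_combination Real.sin_sq_add_cos_sq θ
    rw [e1, e2, mul_pow, div_pow, hS]
    field_simp
  have hpos2 : 0 ≤ b / Real.cos θ ^ 2 * Real.sqrt (a^2 * Real.cos θ^2 + b^2 * Real.sin θ^2) := by
    positivity
  rw [smul_eq_mul, hkey, Real.sqrt_sq hpos2]
  have hSpos : 0 < Real.sqrt (a^2 * Real.cos θ^2 + b^2 * Real.sin θ^2) :=
    Real.sqrt_pos.2 (by positivity)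
  rw [abs_of_pos (by positivity : (0:ℝ) < b / Real.cos θ ^ 2)]
  field_simp


lemma lemB (a b : ℝ) (ha : 0 < a) (hb : 0 < b) :
    (∫ u : ℝ, 1 / Real.sqrt ((u^2 + ((a+b)/2)^2) * (u^2 + a*b))) =
      2 * ∫ x in Ioi (0:ℝ), 1 / Real.sqrt ((x^2 + a^2) * (x^2 + b^2)) := by
  have hs : MeasurableSet (Ioi (0:ℝ)) := measurableSet_Ioi
  set f : ℝ → ℝ := fun x => (x - a*b/x)/2 with hf
  have himg : f '' Ioi (0:ℝ) = univ := by
    refine eq_univ_of_forall fun u => ?_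
    have hab : (0:ℝ) < a*b := mul_pos ha hb
    have hx : 0 < u + Real.sqrt (u^2 + a*b) := by
      have h1 : |u| < Real.sqrt (u^2 + a*b) := by
        rw [← Real.sqrt_sq_eq_abs]
        exact Real.sqrt_lt_sqrt (sq_nonneg u) (by linarith)
      have := neg_abs_le u
      linarith [abs_nonneg u]
    refine ⟨u + Real.sqrt (u^2 + a*b), hx, ?_⟩
    have hsq : Real.sqrt (u^2 + a*b) ^ 2 = u^2 + a*b := Real.sq_sqrt (by positivity)
    show (u + Real.sqrt (u^2 + a*b) - a*b/(u + Real.sqrt (u^2 + a*b)))/2 = u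
    field_simp
    nlinarith [hsq]
  have hinj : InjOn f (Ioi (0:ℝ)) := by
    intro x hx y hy h
    simp only [hf, mem_Ioi] at *
    have hx' : x ≠ 0 := ne_of_gt hx
    have hy' : y ≠ 0 := ne_of_gt hy
    have : (x - y) * (x*y + a*b) = 0 := by
      field_simp at h
      nlinarith [h]
    have hpos : x*y + a*b > 0 := by positivity
    have := mul_eq_zero.1 this
    rcases this with h1 | h2
    · linarith
    · linarith
  set f' : ℝ → ℝ := fun x => (1 + a*b/x^2)/2 with hf'
  have hder : ∀ x ∈ Ioi (0:ℝ), HasDerivWithinAt f (f' x) (Ioi (0:ℝ)) x := by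
    intro x hx
    have hx0 : x ≠ 0 := ne_of_gt hx
    have h1 : HasDerivAt (fun x : ℝ => x - a*b * x⁻¹) (1 - a*b * (-(x^2)⁻¹)) x :=
      (hasDerivAt_id x).sub ((hasDerivAt_inv hx0).const_mul (a*b))
    have h2 := h1.div_const 2
    have e1 : (fun x : ℝ => (x - a*b * x⁻¹)/2) = f := by
      funext y; simp only [hf]; rw [← div_eq_mul_inv]
    have e2 : (1 - a*b * (-(x^2)⁻¹))/2 = f' x := by
      simp only [hf']; field_simp; ring
    rw [e1, e2] at h2
    exact h2.hasDerivWithinAt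
  rw [← setIntegral_univ, ← himg, integral_image_eq_integral_abs_deriv_smul hs hder hinj,
    ← MeasureTheory.integral_const_mul]
  refine setIntegral_congr_fun hs fun x hx => ?_
  have hx0 : 0 < x := hx
  have hab : (0:ℝ) < a*b := mul_pos ha hb
  have hD : Real.sqrt ((x^2 + a^2) * (x^2 + b^2)) ^ 2 = (x^2 + a^2) * (x^2 + b^2) :=
    Real.sq_sqrt (by positivity)
  have e1 : f x^2 + ((a+b)/2)^2 = ((x^2+a^2)*(x^2+b^2))/(4*x^2) := by
    simp only [hf]; field_simp; ring
  have e2 : f x^2 + a*b = (x^2+a*b)^2/(4*x^2) := by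
    simp only [hf]; field_simp; ring
  have hkey : (f x ^ 2 + ((a+b)/2)^2) * (f x ^ 2 + a*b)
      = (Real.sqrt ((x^2 + a^2) * (x^2 + b^2)) * (x^2 + a*b) / (4 * x^2))^2 := by
    rw [e1, e2, div_pow, mul_pow, hD]
    field_simp
  have hq : 0 ≤ Real.sqrt ((x^2 + a^2) * (x^2 + b^2)) * (x^2 + a*b) / (4 * x^2) := by
    positivity
  rw [smul_eq_mul, hkey, Real.sqrt_sq hq]
  have hDpos : 0 < Real.sqrt ((x^2 + a^2) * (x^2 + b^2)) := Real.sqrt_pos.2 (by positivity)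
  have hf'pos : 0 < f' x := by simp only [hf']; positivity
  rw [abs_of_pos hf'pos]
  simp only [hf']
  field_simp
  ring

lemma lemEven (c d : ℝ) :
    (∫ u : ℝ, 1 / Real.sqrt ((u^2 + c) * (u^2 + d))) =
      2 * ∫ u in Ioi (0:ℝ), 1 / Real.sqrt ((u^2 + c) * (u^2 + d)) := by
  have : (∫ u : ℝ, 1 / Real.sqrt ((u^2 + c) * (u^2 + d)))
      = ∫ u : ℝ, (fun t => 1 / Real.sqrt ((t^2 + c) * (t^2 + d))) |u| := by
    simp [sq_abs]
  rw [this]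
  exact integral_comp_abs (f := fun t => 1 / Real.sqrt ((t^2 + c) * (t^2 + d)))

theorem landen_invariance (a b : ℝ) (ha : 0 < a) (hb : 0 < b) :
    (∫ θ in (0 : ℝ)..(π / 2),
        1 / Real.sqrt (a ^ 2 * Real.cos θ ^ 2 + b ^ 2 * Real.sin θ ^ 2)) =
      ∫ θ in (0 : ℝ)..(π / 2),
        1 / Real.sqrt (((a + b) / 2) ^ 2 * Real.cos θ ^ 2 +
          Real.sqrt (a * b) ^ 2 * Real.sin θ ^ 2) := by
  have hab : (0:ℝ) < a * b := mul_pos ha hb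
  have hM : (0:ℝ) < (a + b) / 2 := by linarith
  have hG : (0:ℝ) < Real.sqrt (a * b) := Real.sqrt_pos.2 hab
  have hG2 : Real.sqrt (a * b) ^ 2 = a * b := Real.sq_sqrt hab.le
  have hle : (0:ℝ) ≤ π / 2 := by positivity
  rw [intervalIntegral.integral_of_le hle, intervalIntegral.integral_of_le hle,
    MeasureTheory.integral_Ioc_eq_integral_Ioo, MeasureTheory.integral_Ioc_eq_integral_Ioo,
    ← lemA a b ha hb, ← lemA ((a+b)/2) (Real.sqrt (a*b)) hM hG]
  have h1 := lemB a b ha hb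
  have h2 := lemEven (((a+b)/2)^2) (a*b)
  rw [h1] at h2
  rw [hG2]
  linarith [h2]
end

section
/- For real q with 0 < q < 1: (θ_3(q)² + θ_4(q)²)/2 = θ_3(q²)² and sqrt(θ_3(q)² · θ_4(q)²) = θ_4(q²)². Hence the pair (θ_3(q)², θ_4(q)²) maps under one AGM step to (θ_3(q²)², θ_4(q²)²). -/
noncomputable def theta2 (q : ℝ) : ℝ := ∑' n : ℤ, q ^ (((n : ℝ) + 1 / 2) ^ 2)

noncomputable def theta3 (q : ℝ) : ℝ := ∑' n : ℤ, q ^ (n.natAbs ^ 2)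

noncomputable def theta4 (q : ℝ) : ℝ := ∑' n : ℤ, (-1 : ℝ) ^ n * q ^ (n.natAbs ^ 2)

private lemma sumA {q : ℝ} (hq0 : 0 ≤ q) (hq1 : q < 1) :
    Summable (fun n : ℤ => q ^ (n.natAbs ^ 2)) := by
  apply Summable.of_nat_of_neg <;>
  · refine Summable.of_nonneg_of_le (fun n => pow_nonneg hq0 _) (fun n => ?_)
      (summable_geometric_of_lt_one hq0 hq1)
    simp only [Int.natAbs_neg, Int.natAbs_natCast]
    exact pow_le_pow_of_le_one hq0 hq1.le (Nat.le_self_pow two_ne_zero n)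

private lemma sumB {q : ℝ} (hq0 : 0 ≤ q) (hq1 : q < 1) :
    Summable (fun n : ℤ => (-1 : ℝ) ^ n * q ^ (n.natAbs ^ 2)) := by
  apply Summable.of_norm
  have : ∀ n : ℤ, ‖(-1 : ℝ) ^ n * q ^ (n.natAbs ^ 2)‖ = q ^ (n.natAbs ^ 2) := by
    intro n
    rw [norm_mul, norm_zpow, norm_neg, norm_one, one_zpow, one_mul,
      Real.norm_of_nonneg (pow_nonneg hq0 _)]
  simpa only [this] using sumA hq0 hq1

private lemma neg_one_zpow_add (x y : ℤ) :
    (-1 : ℝ) ^ (x + y) = (-1 : ℝ) ^ x * (-1 : ℝ) ^ y :=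
  zpow_add₀ (by norm_num) x y

private lemma neg_one_zpow_two_mul (v : ℤ) : (-1 : ℝ) ^ (2 * v) = 1 :=
  Even.neg_one_zpow ⟨v, by ring⟩

private lemma neg_one_zpow_sub (u v : ℤ) :
    (-1 : ℝ) ^ (u - v) = (-1 : ℝ) ^ (u + v) := by
  rw [show u + v = (u - v) + 2 * v by ring, neg_one_zpow_add, neg_one_zpow_two_mul, mul_one]

private lemma expo (u v : ℤ) :
    (u + v).natAbs ^ 2 + (u - v).natAbs ^ 2 = 2 * u.natAbs ^ 2 + 2 * v.natAbs ^ 2 := by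
  have h : (((u + v).natAbs ^ 2 + (u - v).natAbs ^ 2 : ℕ) : ℤ)
      = ((2 * u.natAbs ^ 2 + 2 * v.natAbs ^ 2 : ℕ) : ℤ) := by
    push_cast [Int.natAbs_sq]
    simp only [sq_abs]
    ring
  exact_mod_cast h

private lemma prodAA (q : ℝ) (u v : ℤ) :
    q ^ ((u + v).natAbs ^ 2) * q ^ ((u - v).natAbs ^ 2)
      = (q ^ 2) ^ (u.natAbs ^ 2) * (q ^ 2) ^ (v.natAbs ^ 2) := by
  rw [← pow_add, expo u v, pow_add, pow_mul, pow_mul]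

private lemma tsum_J (F : ℤ × ℤ → ℝ) (h0 : ∀ m n : ℤ, Odd (m + n) → F (m, n) = 0) :
    ∑' p : ℤ × ℤ, F (p.1 + p.2, p.1 - p.2) = ∑' p : ℤ × ℤ, F p := by
  have hinj : Function.Injective (fun p : ℤ × ℤ => ((p.1 + p.2, p.1 - p.2) : ℤ × ℤ)) := by
    rintro ⟨a, b⟩ ⟨c, d⟩ h
    simp only [Prod.mk.injEq] at h ⊢
    omega
  refine hinj.tsum_eq ?_
  rintro ⟨m, n⟩ hFp
  rcases Int.even_or_odd (m + n) with he | ho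
  · obtain ⟨k, hk⟩ := he
    exact ⟨(k, m - k), by simp only [Prod.mk.injEq]; omega⟩
  · exact absurd (h0 m n ho) hFp

set_option maxHeartbeats 1000000 in
private lemma key1 {q : ℝ} (hq0 : 0 < q) (hq1 : q < 1) :
    theta3 q ^ 2 + theta4 q ^ 2 = 2 * theta3 (q ^ 2) ^ 2 := by
  have hq0' := hq0.le
  have hsA : Summable (fun n : ℤ => q ^ (n.natAbs ^ 2)) := sumA hq0' hq1
  have hsB : Summable (fun n : ℤ => (-1 : ℝ) ^ n * q ^ (n.natAbs ^ 2)) := sumB hq0' hq1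
  have hnA := summable_norm_iff.2 hsA
  have hnB := summable_norm_iff.2 hsB
  have hAA := summable_mul_of_summable_norm hnA hnA
  have hBB := summable_mul_of_summable_norm hnB hnB
  have hq20 : (0 : ℝ) ≤ q ^ 2 := sq_nonneg q
  have hq21 : q ^ 2 < 1 := by nlinarith
  have hsA' : Summable (fun n : ℤ => (q ^ 2) ^ (n.natAbs ^ 2)) := sumA hq20 hq21
  have hAA' := summable_mul_of_summable_norm (summable_norm_iff.2 hsA') (summable_norm_iff.2 hsA')
  rw [theta3, theta3, theta4, sq, sq, sq, Summable.tsum_mul_tsum hsA hsA hAA,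
    Summable.tsum_mul_tsum hsB hsB hBB, Summable.tsum_mul_tsum hsA' hsA' hAA',
    ← Summable.tsum_add hAA hBB, ← tsum_mul_left]
  rw [← tsum_J (fun p : ℤ × ℤ =>
      q ^ (p.1.natAbs ^ 2) * q ^ (p.2.natAbs ^ 2)
        + ((-1 : ℝ) ^ p.1 * q ^ (p.1.natAbs ^ 2)) * ((-1 : ℝ) ^ p.2 * q ^ (p.2.natAbs ^ 2)))
    (by
      intro m n hodd
      have hs : (-1 : ℝ) ^ m * (-1 : ℝ) ^ n = -1 := by
        rw [← neg_one_zpow_add]; exact Odd.neg_one_zpow hodd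
      simp only
      linear_combination (q ^ (m.natAbs ^ 2) * q ^ (n.natAbs ^ 2)) * hs)]
  refine tsum_congr fun p => ?_
  obtain ⟨u, v⟩ := p
  simp only
  have hs : (-1 : ℝ) ^ (u + v) * (-1 : ℝ) ^ (u - v) = 1 := by
    rw [← neg_one_zpow_add]; exact Even.neg_one_zpow ⟨u, by ring⟩
  linear_combination 2 * prodAA q u v
    + (q ^ ((u + v).natAbs ^ 2) * q ^ ((u - v).natAbs ^ 2)) * hs

set_option maxHeartbeats 1000000 in
private lemma key2 {q : ℝ} (hq0 : 0 < q) (hq1 : q < 1) :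
    theta3 q * theta4 q = theta4 (q ^ 2) ^ 2 := by
  have hq0' := hq0.le
  have hsA : Summable (fun n : ℤ => q ^ (n.natAbs ^ 2)) := sumA hq0' hq1
  have hsB : Summable (fun n : ℤ => (-1 : ℝ) ^ n * q ^ (n.natAbs ^ 2)) := sumB hq0' hq1
  have hnA := summable_norm_iff.2 hsA
  have hnB := summable_norm_iff.2 hsB
  have hAB := summable_mul_of_summable_norm hnA hnB
  have hBA := summable_mul_of_summable_norm hnB hnA
  have hq20 : (0 : ℝ) ≤ q ^ 2 := sq_nonneg q
  have hq21 : q ^ 2 < 1 := by nlinarith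
  have hsB' : Summable (fun n : ℤ => (-1 : ℝ) ^ n * (q ^ 2) ^ (n.natAbs ^ 2)) := sumB hq20 hq21
  have hBB' := summable_mul_of_summable_norm (summable_norm_iff.2 hsB') (summable_norm_iff.2 hsB')
  have hswap : (∑' p : ℤ × ℤ,
        q ^ (p.1.natAbs ^ 2) * ((-1 : ℝ) ^ p.2 * q ^ (p.2.natAbs ^ 2)))
      = ∑' p : ℤ × ℤ, ((-1 : ℝ) ^ p.1 * q ^ (p.1.natAbs ^ 2)) * q ^ (p.2.natAbs ^ 2) := by
    rw [← (Equiv.prodComm ℤ ℤ).tsum_eq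
      (fun p : ℤ × ℤ => ((-1 : ℝ) ^ p.1 * q ^ (p.1.natAbs ^ 2)) * q ^ (p.2.natAbs ^ 2))]
    exact tsum_congr fun p => by simp [mul_comm]
  have hmain : 2 * (theta3 q * theta4 q) = 2 * theta4 (q ^ 2) ^ 2 := by
    rw [theta3, theta4, theta4, sq, Summable.tsum_mul_tsum hsA hsB hAB, Summable.tsum_mul_tsum hsB' hsB' hBB']
    rw [two_mul, ← tsum_mul_left]
    nth_rewrite 2 [hswap]
    rw [← Summable.tsum_add hAB hBA]
    rw [← tsum_J (fun p : ℤ × ℤ =>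
        q ^ (p.1.natAbs ^ 2) * ((-1 : ℝ) ^ p.2 * q ^ (p.2.natAbs ^ 2))
          + ((-1 : ℝ) ^ p.1 * q ^ (p.1.natAbs ^ 2)) * q ^ (p.2.natAbs ^ 2))
      (by
        intro m n hodd
        have h1 : (-1 : ℝ) ^ m * (-1 : ℝ) ^ n = -1 := by
          rw [← neg_one_zpow_add]; exact Odd.neg_one_zpow hodd
        have h2 : (-1 : ℝ) ^ n * (-1 : ℝ) ^ n = 1 := by
          rw [← neg_one_zpow_add]; exact Even.neg_one_zpow ⟨n, rfl⟩
        simp only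
        linear_combination
          (q ^ (m.natAbs ^ 2) * q ^ (n.natAbs ^ 2) * (-1 : ℝ) ^ n) * h1
            - ((-1 : ℝ) ^ m * q ^ (m.natAbs ^ 2) * q ^ (n.natAbs ^ 2)) * h2)]
    refine tsum_congr fun p => ?_
    obtain ⟨u, v⟩ := p
    simp only
    have e1 : (-1 : ℝ) ^ (u + v) = (-1 : ℝ) ^ u * (-1 : ℝ) ^ v := neg_one_zpow_add u v
    have e2 : (-1 : ℝ) ^ (u - v) = (-1 : ℝ) ^ (u + v) := neg_one_zpow_sub u v
    linear_combination
      (q ^ ((u + v).natAbs ^ 2) * q ^ ((u - v).natAbs ^ 2)) * e2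
        + 2 * (q ^ ((u + v).natAbs ^ 2) * q ^ ((u - v).natAbs ^ 2)) * e1
        + 2 * ((-1 : ℝ) ^ u * (-1 : ℝ) ^ v) * prodAA q u v
  linarith [hmain]

theorem theta_agm_step (q : ℝ) (hq0 : 0 < q) (hq1 : q < 1) :
    (theta3 q ^ 2 + theta4 q ^ 2) / 2 = theta3 (q ^ 2) ^ 2 ∧
      Real.sqrt (theta3 q ^ 2 * theta4 q ^ 2) = theta4 (q ^ 2) ^ 2 := by
  constructor
  · linarith [key1 hq0 hq1]
  · rw [← mul_pow, Real.sqrt_sq_eq_abs, key2 hq0 hq1, abs_of_nonneg (sq_nonneg _)]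
end

section
/- The series 2√3 · Σ_{j=0}^∞ (−1)^j / ((2j+1)·3^j) converges to π. -/
open Real

theorem madhava_series :
    HasSum (fun j : ℕ => 2 * Real.sqrt 3 * ((-1 : ℝ) ^ j / ((2 * j + 1) * 3 ^ j))) π := by
  have hs : (0:ℝ) < Real.sqrt 3 := Real.sqrt_pos.mpr (by norm_num)
  have hsq : Real.sqrt 3 ^ 2 = 3 := Real.sq_sqrt (by norm_num)
  have hx : ‖(1 / Real.sqrt 3 : ℝ)‖ < 1 := by
    rw [Real.norm_eq_abs, abs_of_pos (by positivity), div_lt_one hs]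
    nlinarith [hsq]
  have h := (Real.hasSum_arctan hx).mul_left 6
  have harctan : Real.arctan (1 / Real.sqrt 3) = π / 6 := by
    rw [← Real.tan_pi_div_six]
    exact Real.arctan_tan (by linarith [Real.pi_pos]) (by linarith [Real.pi_pos])
  rw [harctan] at h
  have : (6 : ℝ) * (π / 6) = π := by ring
  rw [this] at h
  convert h using 2 with j
  · rfl
  have h3 : (1 / Real.sqrt 3 : ℝ) ^ (2 * j + 1) = (1 / Real.sqrt 3) * (1/3) ^ j := by
    rw [pow_succ, pow_mul, div_pow, one_pow, hsq]; ring
  rw [h3]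
  have key : (2:ℝ) * Real.sqrt 3 = 6 / Real.sqrt 3 := by
    rw [eq_div_iff hs.ne']
    nlinarith [hsq]
  rw [key]
  have h2j : ((2 * j + 1 : ℕ) : ℝ) ≠ 0 := by positivity
  push_cast
  field_simp
  ring_nf
  rw [← mul_pow]; norm_num
end

section
/- Let (a_n, b_n, c_n, s_n) be the Gauss-Legendre iterates: a_0 = 1, b_0 = 1/√2, s_0 = 1/4, a_{n+1} = (a_n+b_n)/2, b_{n+1} = sqrt(a_n b_n), c_{n+1} = a_n − a_{n+1}, s_{n+1} = s_n − 2^n c_{n+1}². Let (k_n, α_n) be the Borwein BB2 iterates: α_0 = 6 − 4√2, k_0 = 3 − 2√2, k_{n+1} = (1 − sqrt(1 − k_n²))/(1 + sqrt(1 − k_n²)), α_{n+1} = (1 + k_{n+1})² α_n − 2^{n+2} k_{n+1}. Then for all n ≥ 0, s_n = a_{n+1}² · α_n, i.e. 1/α_n = a_{n+1}²/s_n. -/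
theorem GL_equiv_BB2 (a b c s k α : ℕ → ℝ)
    (ha0 : a 0 = 1) (hb0 : b 0 = 1 / Real.sqrt 2) (hs0 : s 0 = 1 / 4)
    (ha : ∀ n, a (n + 1) = (a n + b n) / 2)
    (hb : ∀ n, b (n + 1) = Real.sqrt (a n * b n))
    (hc : ∀ n, c (n + 1) = a n - a (n + 1))
    (hs : ∀ n, s (n + 1) = s n - 2 ^ n * c (n + 1) ^ 2)
    (hα0 : α 0 = 6 - 4 * Real.sqrt 2) (hk0 : k 0 = 3 - 2 * Real.sqrt 2)
    (hk : ∀ n, k (n + 1) = (1 - Real.sqrt (1 - k n ^ 2)) / (1 + Real.sqrt (1 - k n ^ 2)))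
    (hα : ∀ n, α (n + 1) = (1 + k (n + 1)) ^ 2 * α n - 2 ^ (n + 2) * k (n + 1)) :
    ∀ n, s n = a (n + 1) ^ 2 * α n := by
  have s2 : Real.sqrt 2 ^ 2 = 2 := Real.sq_sqrt (by norm_num)
  have s2pos : 0 < Real.sqrt 2 := Real.sqrt_pos.mpr (by norm_num)
  -- Invariant: positivity, b ≤ a, and k n = (a n - b n)/(a n + b n)
  have inv : ∀ n, 0 < b n ∧ b n ≤ a n ∧ k n * (a n + b n) = a n - b n := by
    intro n
    induction n with
    | zero =>
      refine ⟨by rw [hb0]; positivity, ?_, ?_⟩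
      · rw [ha0, hb0, div_le_one s2pos]; nlinarith
      · rw [hk0, ha0, hb0]
        field_simp
        nlinarith [s2, s2pos]
    | succ n ih =>
      obtain ⟨hbpos, hba, hkeq⟩ := ih
      have hapos : 0 < a n := lt_of_lt_of_le hbpos hba
      have habpos : 0 < a n * b n := mul_pos hapos hbpos
      have hsq : Real.sqrt (a n * b n) ^ 2 = a n * b n := Real.sq_sqrt habpos.le
      have hxnn : 0 ≤ Real.sqrt (a n * b n) := Real.sqrt_nonneg _
      have hspos : 0 < a n + b n := by linarith
      have hb1pos : 0 < b (n + 1) := by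
        rw [hb]; exact Real.sqrt_pos.mpr habpos
      have hble : b (n + 1) ≤ a (n + 1) := by
        rw [hb, ha]
        have h1 : a n * b n ≤ ((a n + b n) / 2) ^ 2 := by nlinarith [sq_nonneg (a n - b n)]
        calc Real.sqrt (a n * b n) ≤ Real.sqrt (((a n + b n) / 2) ^ 2) := Real.sqrt_le_sqrt h1
          _ = (a n + b n) / 2 := Real.sqrt_sq (by positivity)
      have hkval : k n = (a n - b n) / (a n + b n) := by
        rw [eq_div_iff hspos.ne']; exact hkeq
      have hX : Real.sqrt (1 - k n ^ 2) = 2 * Real.sqrt (a n * b n) / (a n + b n) := by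
        rw [show (1 : ℝ) - k n ^ 2 = (2 * Real.sqrt (a n * b n) / (a n + b n)) ^ 2 by
          rw [div_pow, mul_pow, hsq, hkval]; field_simp; ring]
        exact Real.sqrt_sq (by positivity)
      refine ⟨hb1pos, hble, ?_⟩
      rw [hk, hX, ha, hb]
      have hden : 0 < 1 + 2 * Real.sqrt (a n * b n) / (a n + b n) := by positivity
      field_simp
  -- Main induction
  intro n
  induction n with
  | zero =>
    rw [hs0, hα0, ha 0, ha0, hb0]
    field_simp
    nlinarith [s2, s2pos]
  | succ n ih =>
    obtain ⟨hbpos, hba, hkeq⟩ := inv n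
    obtain ⟨hb1pos, hba1, hk1⟩ := inv (n + 1)
    have hapos : 0 < a n := lt_of_lt_of_le hbpos hba
    have hsqb : b (n + 1) ^ 2 = a n * b n := by
      rw [hb]; exact Real.sq_sqrt (mul_pos hapos hbpos).le
    have h2 : a (n + 2) = (a (n + 1) + b (n + 1)) / 2 := ha (n + 1)
    have key1 : a (n + 2) * (1 + k (n + 1)) = a (n + 1) := by
      linear_combination (1 + k (n + 1)) * h2 + (1 / 2) * hk1
    have key2 : 4 * (a (n + 2) ^ 2 * k (n + 1)) = c (n + 1) ^ 2 := by
      have hc1 : c (n + 1) = (a n - b n) / 2 := by rw [hc n, ha n]; ring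
      rw [hc1, h2]
      linear_combination (a (n + 1) + b (n + 1)) * hk1 - hsqb + (a (n + 1) + (a n + b n) / 2) * ha n
    rw [hs n, hα n, ih]
    linear_combination (-(α n) * (a (n + 2) * (1 + k (n + 1)) + a (n + 1))) * key1 +
      (2 : ℝ) ^ n * key2
end
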